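/- For a < b, 1/2 < α < 1, and fixed x ∈ (a, b), the partial derivative in t of K(x,t) for a < t < x satisfies ∂K(x,t)/∂t = ((1-α)/Γ(α)²) ∫_x^b (s-x)^{α-1}(s-t)^{α-2} ds > 0; in particular, t ↦ K(x,t) is strictly increasing on (a, x). -/

import Mathlib

open Real MeasureTheory Set intervalIntegral

/-- Kernel `K(x,t) = (1/Γ(α)²) ∫_{max{x,t}}^{b} (s-x)^{α-1}(s-t)^{α-1} ds`. -/
noncomputable def K (b α x t : ℝ) : ℝ :=
  (1 / Real.Gamma α ^ 2) * ∫ s in max x t..b, (s - x) ^ (α - 1) * (s - t) ^ (α - 1)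

/-- Green's function `G(x,t) = K(x,t) - K(a,t)K(x,a)/K(a,a)`. -/
noncomputable def G (a b α x t : ℝ) : ℝ :=
  K b α x t - K b α a t * K b α x a / K b α a a

/-- ∂K(x,t)/∂t = ((1-α)/Γ(α)²) ∫_x^b (s-x)^(α-1)(s-t)^(α-2) ds > 0 for
a < t < x < b, hence t ↦ K(x,t) is strictly increasing on (a,x). -/
-- integrability of s ↦ (s-x)^(α-1) on [x,b]
lemma int_rpow_shift {x b α : ℝ} (hα : 1/2 < α) :
    IntervalIntegrable (fun s : ℝ => (s - x) ^ (α - 1)) volume x b := by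
  have h : IntervalIntegrable (fun s : ℝ => s ^ (α - 1)) volume (x - x) (b - x) :=
    intervalIntegral.intervalIntegrable_rpow' (by linarith)
  simpa using h.comp_sub_right x

lemma main_deriv {a b α : ℝ} (hα₁ : 1 / 2 < α) (hα₂ : α < 1) {x t : ℝ}
    (hax : a < x) (hxb : x < b) (hat : a < t) (htx : t < x) :
    HasDerivAt (fun τ => K b α x τ)
      ((1 - α) / Real.Gamma α ^ 2 *
        ∫ s in x..b, (s - x) ^ (α - 1) * (s - t) ^ (α - 2)) t := by
  set ε := (x - t) / 2 with hε
  have hεpos : 0 < ε := by rw [hε]; linarith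
  have hIoc : Set.uIoc x b = Set.Ioc x b := Set.uIoc_of_le hxb.le
  -- DUI for F τ s = (s-x)^(α-1)*(s-τ)^(α-1)
  have key := intervalIntegral.hasDerivAt_integral_of_dominated_loc_of_deriv_le
    (F := fun τ s => (s - x) ^ (α - 1) * (s - τ) ^ (α - 1))
    (F' := fun τ s => (s - x) ^ (α - 1) * ((1 - α) * (s - τ) ^ (α - 2)))
    (x₀ := t) (a := x) (b := b) (μ := volume)
    (bound := fun s => (s - x) ^ (α - 1) * ((1 - α) * ε ^ (α - 2))) (Metric.ball_mem_nhds t hεpos)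
    ?meas ?int ?meas' ?bound ?bint ?diff
  · have hD : (∫ s in x..b, (s - x) ^ (α - 1) * ((1 - α) * (s - t) ^ (α - 2)))
        = (1 - α) * ∫ s in x..b, (s - x) ^ (α - 1) * (s - t) ^ (α - 2) := by
      rw [← intervalIntegral.integral_const_mul]
      apply intervalIntegral.integral_congr
      intro s _; ring
    have h2 := (key.2.const_mul (1 / Real.Gamma α ^ 2))
    have heq : (fun τ => (1 / Real.Gamma α ^ 2) *
        ∫ s in x..b, (s - x) ^ (α - 1) * (s - τ) ^ (α - 1)) =ᶠ[nhds t]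
        (fun τ => K b α x τ) := by
      filter_upwards [Iio_mem_nhds htx] with τ (hτ : τ < x)
      simp [K, max_eq_left hτ.le]
    have := h2.congr_of_eventuallyEq heq.symm
    refine this.congr_deriv ?_
    rw [hD]; ring
  case meas =>
    filter_upwards with τ
    exact (((measurable_id.sub_const x).pow measurable_const).mul
      ((measurable_id.sub_const τ).pow measurable_const)).aestronglyMeasurable
  case int =>
    exact (int_rpow_shift hα₁).mul_continuousOn (by
      apply ContinuousOn.rpow_const (by fun_prop)
      intro s hs
      rw [Set.uIcc_of_le hxb.le] at hs
      left; nlinarith [hs.1])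
  case meas' =>
    exact (((measurable_id.sub_const x).pow measurable_const).mul
      (measurable_const.mul ((measurable_id.sub_const t).pow measurable_const))).aestronglyMeasurable
  case bound =>
    filter_upwards with s hs τ hτ
    rw [hIoc] at hs
    rw [Metric.mem_ball, Real.dist_eq, abs_lt] at hτ
    have hsx : 0 < s - x := by linarith [hs.1]
    have hsτ : ε ≤ s - τ := by
      have : τ < t + ε := by linarith [hτ.2]
      simp only [hε] at *; linarith [hs.1]
    have h1 : (s - τ) ^ (α - 2) ≤ ε ^ (α - 2) :=
      Real.rpow_le_rpow_of_nonpos hεpos hsτ (by linarith)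
    have hστ : (0:ℝ) < s - τ := lt_of_lt_of_le hεpos hsτ
    have hα' : (0:ℝ) ≤ 1 - α := by linarith
    have hnn : 0 ≤ (s - x) ^ (α - 1) * ((1 - α) * (s - τ) ^ (α - 2)) :=
      mul_nonneg (Real.rpow_nonneg hsx.le _)
        (mul_nonneg hα' (Real.rpow_nonneg hστ.le _))
    rw [Real.norm_eq_abs, abs_of_nonneg hnn]
    have h2 : 0 ≤ (s - x) ^ (α - 1) := Real.rpow_nonneg hsx.le _
    exact mul_le_mul_of_nonneg_left (mul_le_mul_of_nonneg_left h1 hα') h2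
  case bint =>
    exact (int_rpow_shift hα₁).mul_const _
  case diff =>
    filter_upwards with s hs τ hτ
    rw [hIoc] at hs
    rw [Metric.mem_ball, Real.dist_eq, abs_lt] at hτ
    have hsτ : 0 < s - τ := by
      have : τ < t + ε := by linarith [hτ.2]
      simp only [hε] at *; linarith [hs.1]
    have h1 : HasDerivAt (fun τ : ℝ => s - τ) (-1) τ := by
      simpa using (hasDerivAt_id τ).const_sub s
    have h2 := h1.rpow_const (p := α - 1) (Or.inl (ne_of_gt hsτ))
    have h3 := h2.const_mul ((s - x) ^ (α - 1))
    refine h3.congr_deriv ?_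
    have : α - 1 - 1 = α - 2 := by ring
    rw [this]; ring

theorem K_deriv_t_pos (a b α : ℝ) (hab : a < b) (hα₁ : 1 / 2 < α) (hα₂ : α < 1)
    (x : ℝ) (hx : x ∈ Set.Ioo a b) :
    (∀ t ∈ Set.Ioo a x,
        HasDerivAt (fun τ => K b α x τ)
          ((1 - α) / Real.Gamma α ^ 2 *
            ∫ s in x..b, (s - x) ^ (α - 1) * (s - t) ^ (α - 2)) t ∧
        0 < (1 - α) / Real.Gamma α ^ 2 *
              ∫ s in x..b, (s - x) ^ (α - 1) * (s - t) ^ (α - 2)) ∧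
      StrictMonoOn (fun t => K b α x t) (Set.Ioo a x) := by
  obtain ⟨hax, hxb⟩ := hx
  have hmain : ∀ t ∈ Set.Ioo a x,
      HasDerivAt (fun τ => K b α x τ)
        ((1 - α) / Real.Gamma α ^ 2 *
          ∫ s in x..b, (s - x) ^ (α - 1) * (s - t) ^ (α - 2)) t ∧
      0 < (1 - α) / Real.Gamma α ^ 2 *
            ∫ s in x..b, (s - x) ^ (α - 1) * (s - t) ^ (α - 2) := by
    rintro t ⟨hat, htx⟩
    refine ⟨main_deriv hα₁ hα₂ hax hxb hat htx, ?_⟩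
    have hc : 0 < (1 - α) / Real.Gamma α ^ 2 := by
      have h1 := Real.Gamma_pos_of_pos (show (0:ℝ) < α by linarith)
      have h2 : (0:ℝ) < 1 - α := by linarith
      positivity
    have hint : IntervalIntegrable
        (fun s => (s - x) ^ (α - 1) * (s - t) ^ (α - 2)) volume x b := by
      exact (int_rpow_shift hα₁).mul_continuousOn (by
        apply ContinuousOn.rpow_const (by fun_prop)
        intro s hs
        rw [Set.uIcc_of_le hxb.le] at hs
        left; nlinarith [hs.1])
    have hpos := intervalIntegral.intervalIntegral_pos_of_pos_on hint
      (fun s hs => by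
        have h1 : 0 < s - x := by linarith [hs.1]
        have h2 : 0 < s - t := by linarith [hs.1]
        positivity) hxb
    positivity
  refine ⟨hmain, ?_⟩
  apply strictMonoOn_of_deriv_pos (convex_Ioo a x)
  · intro t ht
    exact ((hmain t ht).1.differentiableAt).continuousAt.continuousWithinAt
  · rw [interior_Ioo]
    intro t ht
    rw [((hmain t ht).1).deriv]
    exact (hmain t ht).2
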